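/- arXiv:2110.03685 — 3 statements merged into one kernel-verified Lean document; each statement's English description precedes it below -/
import Mathlib

section
/- For every real step size τ and every index i, the operator B + (τ²/24) C applied to the coordinate function pᵢ equals −∂/∂qᵢ of the modified potential V_{F2}(q) := V(q) − (τ²/24) |∇V(q)|². Hence B + (τ²/24) C is exactly the momentum-version Lie operator associated with the modified potential V_{F2}, so the force-gradient scheme F2 is the Verlet scheme applied to the modified Hamiltonian H_{F2} = T + V_{F2}. -/
open scoped BigOperators

/-- Partial derivative with respect to the coordinate `qᵢ` of a function on phase space. -/
noncomputable def pder_q {n : ℕ} (F : (Fin n → ℝ) × (Fin n → ℝ) → ℝ)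
    (i : Fin n) (z : (Fin n → ℝ) × (Fin n → ℝ)) : ℝ :=
  fderiv ℝ F z (Pi.single i 1, 0)

/-- Partial derivative with respect to the momentum `pᵢ` of a function on phase space. -/
noncomputable def pder_p {n : ℕ} (F : (Fin n → ℝ) × (Fin n → ℝ) → ℝ)
    (i : Fin n) (z : (Fin n → ℝ) × (Fin n → ℝ)) : ℝ :=
  fderiv ℝ F z (0, Pi.single i 1)

/-- The operator `A F = Σᵢ pᵢ ∂F/∂qᵢ`, associated with `T(p) = |p|²/2`. -/
noncomputable def opA {n : ℕ} (F : (Fin n → ℝ) × (Fin n → ℝ) → ℝ) :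
    (Fin n → ℝ) × (Fin n → ℝ) → ℝ :=
  fun z => ∑ i, z.2 i * pder_q F i z

/-- The operator `B F = −Σᵢ V_{qᵢ} ∂F/∂pᵢ`, associated with the potential `V`. -/
noncomputable def opB {n : ℕ} (V : (Fin n → ℝ) → ℝ)
    (F : (Fin n → ℝ) × (Fin n → ℝ) → ℝ) :
    (Fin n → ℝ) × (Fin n → ℝ) → ℝ :=
  fun z => -∑ i, fderiv ℝ V z.1 (Pi.single i 1) * pder_p F i z

/-- The commutator `[A,B] = A∘B − B∘A`. -/
noncomputable def commAB {n : ℕ} (V : (Fin n → ℝ) → ℝ)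
    (F : (Fin n → ℝ) × (Fin n → ℝ) → ℝ) :
    (Fin n → ℝ) × (Fin n → ℝ) → ℝ :=
  fun z => opA (opB V F) z - opB V (opA F) z

/-- The force-gradient operator `C = [B,[A,B]] = B∘[A,B] − [A,B]∘B`. -/
noncomputable def opC {n : ℕ} (V : (Fin n → ℝ) → ℝ)
    (F : (Fin n → ℝ) × (Fin n → ℝ) → ℝ) :
    (Fin n → ℝ) × (Fin n → ℝ) → ℝ :=
  fun z => opB V (commAB V F) z - commAB V (opB V F) z


/-- The modified potential `V_{F2}(q) = V(q) − (τ²/24) |∇V(q)|²`. -/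
noncomputable def VF2 {n : ℕ} (V : (Fin n → ℝ) → ℝ) (τ : ℝ) : (Fin n → ℝ) → ℝ :=
  fun q => V q - (τ ^ 2 / 24) * ∑ j, (fderiv ℝ V q (Pi.single j 1)) ^ 2

section Aux

variable {n : ℕ}

lemma fg_fderiv_coord_p (i : Fin n) (z : (Fin n → ℝ) × (Fin n → ℝ)) :
    fderiv ℝ (fun w : (Fin n → ℝ) × (Fin n → ℝ) => w.2 i) z
      = (ContinuousLinearMap.proj i).comp
          (ContinuousLinearMap.snd ℝ (Fin n → ℝ) (Fin n → ℝ)) :=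
  ((ContinuousLinearMap.proj i).comp
      (ContinuousLinearMap.snd ℝ (Fin n → ℝ) (Fin n → ℝ))).fderiv

lemma fg_pder_p_coord (i j : Fin n) (z : (Fin n → ℝ) × (Fin n → ℝ)) :
    pder_p (fun w => w.2 i) j z = if i = j then 1 else 0 := by
  rw [pder_p, fg_fderiv_coord_p]
  simp [Pi.single_apply]

lemma fg_pder_q_coord (i j : Fin n) (z : (Fin n → ℝ) × (Fin n → ℝ)) :
    pder_q (fun w => w.2 i) j z = 0 := by
  rw [pder_q, fg_fderiv_coord_p]
  simp

lemma fg_opB_coord (W : (Fin n → ℝ) → ℝ) (i : Fin n) (z : (Fin n → ℝ) × (Fin n → ℝ)) :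
    opB W (fun w => w.2 i) z = -fderiv ℝ W z.1 (Pi.single i 1) := by
  simp [opB, fg_pder_p_coord, mul_ite]

lemma fg_opA_coord (i : Fin n) :
    opA (fun w : (Fin n → ℝ) × (Fin n → ℝ) => w.2 i) = fun _ => 0 := by
  funext z
  simp [opA, fg_pder_q_coord]

variable {V : (Fin n → ℝ) → ℝ}

lemma fg_top_diff {m : ℕ} {E : Type*} [NormedAddCommGroup E]
    [NormedSpace ℝ E] {g : (Fin m → ℝ) → E} (h : ContDiff ℝ (⊤ : ℕ∞) g) :
    Differentiable ℝ g :=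
  h.differentiable (by
    have : ((1:ℕ∞) : WithTop ℕ∞) = (1 : WithTop ℕ∞) := by norm_cast
    simp)

lemma fg_contDiff_fderiv {m : ℕ} {E : Type*} [NormedAddCommGroup E]
    [NormedSpace ℝ E] {g : (Fin m → ℝ) → E} (h : ContDiff ℝ (⊤ : ℕ∞) g) :
    ContDiff ℝ (⊤ : ℕ∞) (fderiv ℝ g) := h.fderiv_right (le_of_eq rfl)

lemma fg_diff_dV (hV : ContDiff ℝ (⊤ : ℕ∞) V) (v : Fin n → ℝ) :
    Differentiable ℝ (fun q => fderiv ℝ V q v) := by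
  exact (ContinuousLinearMap.apply ℝ ℝ v).differentiable.comp
    (fg_top_diff (fg_contDiff_fderiv hV))

lemma fg_fderiv_dV (hV : ContDiff ℝ (⊤ : ℕ∞) V) (v w : Fin n → ℝ) (q : Fin n → ℝ) :
    fderiv ℝ (fun q => fderiv ℝ V q v) q w = fderiv ℝ (fderiv ℝ V) q w v := by
  have h1 : Differentiable ℝ (fderiv ℝ V) := fg_top_diff (fg_contDiff_fderiv hV)
  have := fderiv_clm_apply (c := fderiv ℝ V) (u := fun _ => v) (x := q)
    (h1.differentiableAt) (differentiableAt_const v)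
  rw [this]
  simp

lemma fg_fderiv_comp_fst (g : (Fin n → ℝ) → ℝ) (z : (Fin n → ℝ) × (Fin n → ℝ))
    (hg : DifferentiableAt ℝ g z.1) :
    fderiv ℝ (fun w : (Fin n → ℝ) × (Fin n → ℝ) => g w.1) z
      = (fderiv ℝ g z.1).comp (ContinuousLinearMap.fst ℝ (Fin n → ℝ) (Fin n → ℝ)) := by
  have h : (fun w : (Fin n → ℝ) × (Fin n → ℝ) => g w.1) = g ∘ Prod.fst := rfl
  rw [h, fderiv_comp z hg differentiableAt_fst, fderiv_fst]

end Aux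

/-- `(B + (τ²/24) C) pᵢ = −∂V_{F2}/∂qᵢ`: the operator `B + (τ²/24) C` is exactly the
momentum-version Lie operator associated with the modified potential `V_{F2}`, so the
force-gradient scheme F2 is the Verlet scheme for the modified Hamiltonian
`H_{F2} = T + V_{F2}`. -/
theorem modified_potential_F2 {n : ℕ} (V : (Fin n → ℝ) → ℝ)
    (hV : ContDiff ℝ (⊤ : ℕ∞) V) (τ : ℝ) (i : Fin n) (q p : Fin n → ℝ) :
    opB V (fun w => w.2 i) (q, p) + (τ ^ 2 / 24) * opC V (fun w => w.2 i) (q, p) =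
      -fderiv ℝ (VF2 V τ) q (Pi.single i 1) ∧
    opB V (fun w => w.2 i) (q, p) + (τ ^ 2 / 24) * opC V (fun w => w.2 i) (q, p) =
      opB (VF2 V τ) (fun w => w.2 i) (q, p) := by
  classical
  -- notation
  set e : Fin n → (Fin n → ℝ) := fun j => Pi.single j 1 with he
  have hVd : Differentiable ℝ V := fg_top_diff hV
  have hDV : Differentiable ℝ (fderiv ℝ V) := fg_top_diff (fg_contDiff_fderiv hV)
  have hD2 : Differentiable ℝ (fderiv ℝ (fderiv ℝ V)) :=
    fg_top_diff (fg_contDiff_fderiv (fg_contDiff_fderiv hV))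
  -- ψ j q = second derivative D²V(q)(e_j, e_i); differentiable
  have hψd : ∀ j : Fin n, Differentiable ℝ (fun q => fderiv ℝ (fderiv ℝ V) q (e j) (e i)) := by
    intro j
    exact fun q => ((hD2 q).clm_apply (differentiableAt_const _)).clm_apply (differentiableAt_const _)
  -- step 1: B p_i = -V_i
  have hG : opB V (fun w : (Fin n → ℝ) × (Fin n → ℝ) => w.2 i)
      = fun z => -fderiv ℝ V z.1 (e i) := funext (fun z => fg_opB_coord V i z)
  -- step 2: [A,B] p_i
  have hAG : opA (opB V (fun w : (Fin n → ℝ) × (Fin n → ℝ) => w.2 i))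
      = fun z => -∑ j, z.2 j * fderiv ℝ (fderiv ℝ V) z.1 (e j) (e i) := by
    rw [hG]
    funext z
    rw [opA]
    have hterm : ∀ j : Fin n,
        pder_q (fun z : (Fin n → ℝ) × (Fin n → ℝ) => -fderiv ℝ V z.1 (e i)) j z
          = -(fderiv ℝ (fderiv ℝ V) z.1 (e j) (e i)) := by
      intro j
      rw [pder_q]
      have hneg : (fun z : (Fin n → ℝ) × (Fin n → ℝ) => -fderiv ℝ V z.1 (e i))
          = fun z => -((fun q => fderiv ℝ V q (e i)) z.1) := rfl
      rw [hneg, fderiv_fun_neg, fg_fderiv_comp_fst _ _ ((fg_diff_dV hV (e i)) z.1)]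
      simp [fg_fderiv_dV hV]
      rfl
    simp only [hterm]
    rw [← Finset.sum_neg_distrib]
    congr 1
    funext j
    ring
  have hcomm : commAB V (fun w : (Fin n → ℝ) × (Fin n → ℝ) => w.2 i)
      = fun z => -∑ j, z.2 j * fderiv ℝ (fderiv ℝ V) z.1 (e j) (e i) := by
    funext z
    rw [commAB, hAG, fg_opA_coord]
    have : opB V (fun _ => (0:ℝ)) z = 0 := by
      simp [opB, pder_p]
    rw [this, sub_zero]
  -- pder_p of H z = -∑ j z.2 j ψ j z.1 in direction k equals -ψ k z.1
  have hpderH : ∀ (k : Fin n) (z : (Fin n → ℝ) × (Fin n → ℝ)),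
      pder_p (fun z : (Fin n → ℝ) × (Fin n → ℝ) =>
          -∑ j, z.2 j * fderiv ℝ (fderiv ℝ V) z.1 (e j) (e i)) k z
        = -(fderiv ℝ (fderiv ℝ V) z.1 (e k) (e i)) := by
    intro k z
    rw [pder_p]
    have hdj : ∀ j : Fin n, DifferentiableAt ℝ
        (fun z : (Fin n → ℝ) × (Fin n → ℝ) => z.2 j * fderiv ℝ (fderiv ℝ V) z.1 (e j) (e i)) z := by
      intro j
      have h1 : DifferentiableAt ℝ (fun z : (Fin n → ℝ) × (Fin n → ℝ) => z.2 j) z :=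
        ((ContinuousLinearMap.proj j).comp
          (ContinuousLinearMap.snd ℝ (Fin n → ℝ) (Fin n → ℝ))).differentiableAt
      have h2 : DifferentiableAt ℝ
          (fun z : (Fin n → ℝ) × (Fin n → ℝ) => fderiv ℝ (fderiv ℝ V) z.1 (e j) (e i)) z :=
        DifferentiableAt.comp z ((hψd j) z.1) differentiableAt_fst
      exact h1.mul h2
    have hsplit : (fun z : (Fin n → ℝ) × (Fin n → ℝ) =>
        -∑ j, z.2 j * fderiv ℝ (fderiv ℝ V) z.1 (e j) (e i))
        = fun z => -(∑ j, (fun w : (Fin n → ℝ) × (Fin n → ℝ) =>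
            w.2 j * fderiv ℝ (fderiv ℝ V) w.1 (e j) (e i)) z) := rfl
    rw [hsplit, fderiv_fun_neg]
    rw [fderiv_fun_sum (fun j _ => hdj j)]
    simp only [ContinuousLinearMap.neg_apply, ContinuousLinearMap.sum_apply]
    have hterm : ∀ j : Fin n,
        fderiv ℝ (fun z : (Fin n → ℝ) × (Fin n → ℝ) =>
          z.2 j * fderiv ℝ (fderiv ℝ V) z.1 (e j) (e i)) z (0, e k)
          = (if j = k then 1 else 0) * fderiv ℝ (fderiv ℝ V) z.1 (e j) (e i) := by
      intro j
      have h1 : DifferentiableAt ℝ (fun z : (Fin n → ℝ) × (Fin n → ℝ) => z.2 j) z :=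
        ((ContinuousLinearMap.proj j).comp
          (ContinuousLinearMap.snd ℝ (Fin n → ℝ) (Fin n → ℝ))).differentiableAt
      have h2 : DifferentiableAt ℝ
          (fun z : (Fin n → ℝ) × (Fin n → ℝ) => fderiv ℝ (fderiv ℝ V) z.1 (e j) (e i)) z :=
        DifferentiableAt.comp z ((hψd j) z.1) differentiableAt_fst
      rw [fderiv_fun_mul h1 h2]
      have e1 : fderiv ℝ (fun z : (Fin n → ℝ) × (Fin n → ℝ) => z.2 j) z (0, e k)
          = (if j = k then 1 else 0) := by
        rw [fg_fderiv_coord_p]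
        simp [he, Pi.single_apply]
      have e2 : fderiv ℝ
          (fun z : (Fin n → ℝ) × (Fin n → ℝ) => fderiv ℝ (fderiv ℝ V) z.1 (e j) (e i)) z (0, e k)
          = 0 := by
        rw [fg_fderiv_comp_fst _ _ ((hψd j) z.1)]
        simp
      simp only [ContinuousLinearMap.add_apply, ContinuousLinearMap.smul_apply, e1, e2]
      simp
    simp only [show (Pi.single k 1 : Fin n → ℝ) = e k from rfl, hterm]
    simp [Finset.sum_ite_eq, ite_mul]
  -- step 3: B [A,B] p_i
  have hBcomm : opB V (commAB V (fun w : (Fin n → ℝ) × (Fin n → ℝ) => w.2 i)) (q, p)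
      = ∑ k, fderiv ℝ V q (e k) * fderiv ℝ (fderiv ℝ V) q (e k) (e i) := by
    rw [hcomm, opB]
    simp only [hpderH]
    simp only [mul_neg, Finset.sum_neg_distrib, neg_neg]
    rfl
  -- step 4: [A,B] B p_i
  have hcommB : commAB V (opB V (fun w : (Fin n → ℝ) × (Fin n → ℝ) => w.2 i)) (q, p)
      = -∑ k, fderiv ℝ V q (e k) * fderiv ℝ (fderiv ℝ V) q (e k) (e i) := by
    rw [commAB]
    -- opB V G = 0
    have hBG : opB V (opB V (fun w : (Fin n → ℝ) × (Fin n → ℝ) => w.2 i)) = fun _ => 0 := by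
      rw [hG]
      funext z
      rw [opB]
      have : ∀ k : Fin n, pder_p (fun z : (Fin n → ℝ) × (Fin n → ℝ) =>
          -fderiv ℝ V z.1 (e i)) k z = 0 := by
        intro k
        rw [pder_p]
        have hneg : (fun z : (Fin n → ℝ) × (Fin n → ℝ) => -fderiv ℝ V z.1 (e i))
            = fun z => -((fun q => fderiv ℝ V q (e i)) z.1) := rfl
        rw [hneg, fderiv_fun_neg, fg_fderiv_comp_fst _ _ ((fg_diff_dV hV (e i)) z.1)]
        simp
      simp [this]
    rw [hBG]
    have h0 : opA (fun _ : (Fin n → ℝ) × (Fin n → ℝ) => (0:ℝ)) (q, p) = 0 := by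
      simp [opA, pder_q]
    rw [h0, zero_sub, hAG]
    rw [show opB V (fun z : (Fin n → ℝ) × (Fin n → ℝ) =>
        -∑ j, z.2 j * fderiv ℝ (fderiv ℝ V) z.1 (e j) (e i)) (q, p)
      = -∑ k, fderiv ℝ V (q, p).1 (e k) *
          pder_p (fun z : (Fin n → ℝ) × (Fin n → ℝ) =>
            -∑ j, z.2 j * fderiv ℝ (fderiv ℝ V) z.1 (e j) (e i)) k (q, p) from rfl]
    simp only [hpderH]
    simp only [mul_neg, Finset.sum_neg_distrib, neg_neg]
  -- step 5: C p_i
  have hC : opC V (fun w : (Fin n → ℝ) × (Fin n → ℝ) => w.2 i) (q, p)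
      = 2 * ∑ k, fderiv ℝ V q (e k) * fderiv ℝ (fderiv ℝ V) q (e k) (e i) := by
    rw [opC, hBcomm, hcommB]
    ring
  -- derivative of VF2
  have hsymm : IsSymmSndFDerivAt ℝ V q := hV.contDiffAt.isSymmSndFDerivAt (by
    have : ((2:ℕ∞) : WithTop ℕ∞) = (2 : WithTop ℕ∞) := by norm_cast
    rw [minSmoothness_of_isRCLikeNormedField]; exact WithTop.coe_le_coe.mpr le_top)
  have hVF2 : fderiv ℝ (VF2 V τ) q (e i)
      = fderiv ℝ V q (e i)
        - (τ ^ 2 / 24) * ∑ k, 2 * (fderiv ℝ V q (e k) * fderiv ℝ (fderiv ℝ V) q (e k) (e i)) := by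
    have hSd : ∀ j : Fin n, DifferentiableAt ℝ (fun q => fderiv ℝ V q (e j) ^ 2) q := by
      intro j
      exact ((fg_diff_dV hV (e j)) q).pow 2
    have hsum : DifferentiableAt ℝ (fun q => ∑ j, fderiv ℝ V q (e j) ^ 2) q :=
      DifferentiableAt.fun_sum (fun j _ => hSd j)
    have h1 : fderiv ℝ (VF2 V τ) q
        = fderiv ℝ V q - (τ ^ 2 / 24) • fderiv ℝ (fun q => ∑ j, fderiv ℝ V q (e j) ^ 2) q := by
      unfold VF2
      rw [show (fun q => V q - τ ^ 2 / 24 * ∑ j, fderiv ℝ V q (Pi.single j 1) ^ 2)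
          = fun q => V q - τ ^ 2 / 24 * (fun q => ∑ j, fderiv ℝ V q (e j) ^ 2) q from rfl]
      rw [fderiv_fun_sub (hVd q) ((hsum.const_mul _) : _), fderiv_const_mul hsum]
    rw [h1]
    simp only [ContinuousLinearMap.sub_apply, ContinuousLinearMap.smul_apply, smul_eq_mul]
    congr 1
    congr 1
    rw [fderiv_fun_sum (fun j _ => hSd j)]
    simp only [ContinuousLinearMap.sum_apply]
    congr 1
    funext j
    have hsq : (fun q => fderiv ℝ V q (e j) ^ 2)
        = fun q => (fun q => fderiv ℝ V q (e j)) q * (fun q => fderiv ℝ V q (e j)) q := by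
      funext q; ring
    rw [hsq, fderiv_fun_mul ((fg_diff_dV hV (e j)) q) ((fg_diff_dV hV (e j)) q)]
    simp only [ContinuousLinearMap.add_apply, ContinuousLinearMap.smul_apply, smul_eq_mul]
    rw [fg_fderiv_dV hV (e j) (e i) q]
    rw [hsymm (e i) (e j)]
    ring
  have hB : opB V (fun w : (Fin n → ℝ) × (Fin n → ℝ) => w.2 i) (q, p)
      = -fderiv ℝ V q (e i) := fg_opB_coord V i (q, p)
  have key : -fderiv ℝ V q (e i)
        + τ ^ 2 / 24 * (2 * ∑ k, fderiv ℝ V q (e k) * fderiv ℝ (fderiv ℝ V) q (e k) (e i))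
      = -(fderiv ℝ V q (e i)
        - τ ^ 2 / 24 * ∑ k, 2 * (fderiv ℝ V q (e k) * fderiv ℝ (fderiv ℝ V) q (e k) (e i))) := by
    rw [← Finset.mul_sum]
    ring
  constructor
  · rw [hB, hC, hVF2]
    exact key
  · rw [fg_opB_coord (VF2 V τ) i (q, p), hB, hC]
    show _ = -fderiv ℝ (VF2 V τ) q (e i)
    rw [hVF2]
    exact key
end

section
/- Let U : ℝⁿ → ℝ be twice continuously differentiable and let τ ∈ ℝ. The leapfrog (Verlet) map Φ^U_τ is symplectic: at every point (q,p), its derivative, as a linear map on ℝⁿ × ℝⁿ, preserves the canonical symplectic form ω, i.e. ω(DΦ^U_τ(q,p) u, DΦ^U_τ(q,p) v) = ω(u,v) for all tangent vectors u, v. -/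
open scoped BigOperators

/-- The gradient `∇U` of a function `U : ℝⁿ → ℝ`, taken componentwise. -/
noncomputable def grad {n : ℕ} (U : (Fin n → ℝ) → ℝ) (q : Fin n → ℝ) : Fin n → ℝ :=
  fun i => fderiv ℝ U q (Pi.single i 1)

/-- The leapfrog (Verlet) map `Φ^U_τ(q,p) = (Q,P)` with
`p⁺ = p − (τ/2)∇U(q)`, `Q = q + τ p⁺`, `P = p⁺ − (τ/2)∇U(Q)`. -/
noncomputable def leapfrog {n : ℕ} (U : (Fin n → ℝ) → ℝ) (τ : ℝ)
    (z : (Fin n → ℝ) × (Fin n → ℝ)) : (Fin n → ℝ) × (Fin n → ℝ) :=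
  let pplus := z.2 - (τ / 2) • grad U z.1
  let Q := z.1 + τ • pplus
  (Q, pplus - (τ / 2) • grad U Q)

/-- The canonical symplectic form `ω((δq,δp),(δq',δp')) = ⟨δq,δp'⟩ − ⟨δq',δp⟩` on ℝⁿ × ℝⁿ. -/
noncomputable def omegaForm {n : ℕ} (u v : (Fin n → ℝ) × (Fin n → ℝ)) : ℝ :=
  (∑ i, u.1 i * v.2 i) - ∑ i, v.1 i * u.2 i

section Aux

variable {n : ℕ}

/-- Evaluation of a functional on the standard basis vectors, as a CLM. -/
noncomputable def evBasis (n : ℕ) : ((Fin n → ℝ) →L[ℝ] ℝ) →L[ℝ] (Fin n → ℝ) :=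
  ContinuousLinearMap.pi fun i => ContinuousLinearMap.apply ℝ ℝ (Pi.single i 1)

/-- Derivative of the gradient. -/
noncomputable def gradDeriv (U : (Fin n → ℝ) → ℝ) (q : Fin n → ℝ) :
    (Fin n → ℝ) →L[ℝ] (Fin n → ℝ) :=
  (evBasis n).comp (fderiv ℝ (fderiv ℝ U) q)

lemma grad_hasFDerivAt {U : (Fin n → ℝ) → ℝ} (hU : ContDiff ℝ 2 U) (q : Fin n → ℝ) :
    HasFDerivAt (grad U) (gradDeriv U q) q := by
  have h1 : ContDiff ℝ 1 (fderiv ℝ U) := hU.fderiv_right (by norm_num)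
  have h2 : HasFDerivAt (fderiv ℝ U) (fderiv ℝ (fderiv ℝ U) q) q :=
    (h1.differentiable one_ne_zero q).hasFDerivAt
  have := ((evBasis n).hasFDerivAt).comp q h2
  exact this

lemma gradDeriv_symm {U : (Fin n → ℝ) → ℝ} (hU : ContDiff ℝ 2 U) (q a b : Fin n → ℝ) :
    ∑ i, a i * gradDeriv U q b i = ∑ i, b i * gradDeriv U q a i := by
  have h1 : ContDiff ℝ 1 (fderiv ℝ U) := hU.fderiv_right (by norm_num)
  have h2 : HasFDerivAt (fderiv ℝ U) (fderiv ℝ (fderiv ℝ U) q) q :=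
    (h1.differentiable one_ne_zero q).hasFDerivAt
  have hsym := second_derivative_symmetric
    (f' := fderiv ℝ U) (fun y => (hU.differentiable (by norm_num) y).hasFDerivAt) h2
  have key : ∀ x y : Fin n → ℝ,
      ∑ i, x i * gradDeriv U q y i = fderiv ℝ (fderiv ℝ U) q y x := by
    intro x y
    have : gradDeriv U q y = fun i => fderiv ℝ (fderiv ℝ U) q y (Pi.single i 1) := rfl
    rw [this]
    have hx : (x : Fin n → ℝ) = ∑ i, x i • (Pi.single i (1 : ℝ) : Fin n → ℝ) := by
      symm
      simp only [← Pi.single_smul, smul_eq_mul, mul_one, Finset.univ_sum_single]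
    conv_rhs => rw [hx]
    rw [map_sum]
    simp [mul_comm]
  rw [key a b, key b a, hsym]

/-- Kick map -/
noncomputable def kick (U : (Fin n → ℝ) → ℝ) (c : ℝ) (z : (Fin n → ℝ) × (Fin n → ℝ)) :
    (Fin n → ℝ) × (Fin n → ℝ) :=
  (z.1, z.2 - c • grad U z.1)

noncomputable def kickDeriv (U : (Fin n → ℝ) → ℝ) (c : ℝ) (q : Fin n → ℝ) :
    ((Fin n → ℝ) × (Fin n → ℝ)) →L[ℝ] ((Fin n → ℝ) × (Fin n → ℝ)) :=
  (ContinuousLinearMap.fst ℝ _ _).prod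
    (ContinuousLinearMap.snd ℝ _ _ - c • (gradDeriv U q).comp (ContinuousLinearMap.fst ℝ _ _))

lemma kick_hasFDerivAt {U : (Fin n → ℝ) → ℝ} (hU : ContDiff ℝ 2 U) (c : ℝ)
    (z : (Fin n → ℝ) × (Fin n → ℝ)) :
    HasFDerivAt (kick U c) (kickDeriv U c z.1) z := by
  have hg : HasFDerivAt (fun w : (Fin n → ℝ) × (Fin n → ℝ) => grad U w.1)
      ((gradDeriv U z.1).comp (ContinuousLinearMap.fst ℝ _ _)) z :=
    (grad_hasFDerivAt hU z.1).comp z (hasFDerivAt_fst)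
  exact HasFDerivAt.prodMk (hasFDerivAt_fst) (HasFDerivAt.sub (hasFDerivAt_snd) (hg.const_smul c))

/-- Drift linear map -/
noncomputable def driftL (n : ℕ) (τ : ℝ) :
    ((Fin n → ℝ) × (Fin n → ℝ)) →L[ℝ] ((Fin n → ℝ) × (Fin n → ℝ)) :=
  ContinuousLinearMap.prod
    (ContinuousLinearMap.fst ℝ (Fin n → ℝ) (Fin n → ℝ) +
      τ • ContinuousLinearMap.snd ℝ (Fin n → ℝ) (Fin n → ℝ))
    (ContinuousLinearMap.snd ℝ (Fin n → ℝ) (Fin n → ℝ))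

lemma leapfrog_eq (U : (Fin n → ℝ) → ℝ) (τ : ℝ) :
    leapfrog U τ = kick U (τ/2) ∘ (driftL n τ) ∘ kick U (τ/2) := by
  funext z
  simp [leapfrog, kick, driftL]

lemma omega_kickDeriv {U : (Fin n → ℝ) → ℝ} (hU : ContDiff ℝ 2 U) (c : ℝ) (q : Fin n → ℝ)
    (u v : (Fin n → ℝ) × (Fin n → ℝ)) :
    omegaForm (kickDeriv U c q u) (kickDeriv U c q v) = omegaForm u v := by
  have hsym := gradDeriv_symm hU q u.1 v.1
  simp only [omegaForm, kickDeriv, ContinuousLinearMap.prod_apply,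
    ContinuousLinearMap.coe_fst', ContinuousLinearMap.coe_snd',
    ContinuousLinearMap.sub_apply, ContinuousLinearMap.smul_apply,
    ContinuousLinearMap.coe_comp', Function.comp_apply,
    Pi.sub_apply, Pi.smul_apply, smul_eq_mul]
  have e1 : ∀ w x : (Fin n → ℝ) × (Fin n → ℝ),
      (∑ i, w.1 i * (x.2 i - c * gradDeriv U q x.1 i)) =
        (∑ i, w.1 i * x.2 i) - c * ∑ i, w.1 i * gradDeriv U q x.1 i := by
    intro w x
    rw [Finset.mul_sum, ← Finset.sum_sub_distrib]
    congr 1; ext i; ring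
  rw [e1 u v, e1 v u, hsym]
  ring

lemma omega_driftL (τ : ℝ) (u v : (Fin n → ℝ) × (Fin n → ℝ)) :
    omegaForm (driftL n τ u) (driftL n τ v) = omegaForm u v := by
  simp only [omegaForm, driftL, ContinuousLinearMap.prod_apply,
    ContinuousLinearMap.add_apply, ContinuousLinearMap.coe_fst',
    ContinuousLinearMap.coe_snd', ContinuousLinearMap.smul_apply,
    Pi.add_apply, Pi.smul_apply, smul_eq_mul]
  have h : ∀ a b : (Fin n → ℝ) × (Fin n → ℝ),
      ∑ i, (a.1 i + τ * a.2 i) * b.2 i = (∑ i, a.1 i * b.2 i) + τ * ∑ i, a.2 i * b.2 i := by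
    intro a b
    rw [Finset.mul_sum, ← Finset.sum_add_distrib]
    congr 1; ext i; ring
  rw [h u v, h v u]
  have : ∑ i, u.2 i * v.2 i = ∑ i, v.2 i * u.2 i := by
    congr 1; ext i; ring
  rw [this]; ring

end Aux

/-- The leapfrog (Verlet) map is symplectic: at every point its derivative preserves the
canonical symplectic form. -/
theorem leapfrog_symplectic {n : ℕ} (U : (Fin n → ℝ) → ℝ) (hU : ContDiff ℝ 2 U) (τ : ℝ)
    (z u v : (Fin n → ℝ) × (Fin n → ℝ)) :
    omegaForm (fderiv ℝ (leapfrog U τ) z u) (fderiv ℝ (leapfrog U τ) z v) =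
      omegaForm u v := by
  set c := τ / 2 with hc
  set w1 := kick U c z with hw1
  set w2 := driftL n τ w1 with hw2
  have hK1 : HasFDerivAt (kick U c) (kickDeriv U c z.1) z := kick_hasFDerivAt hU c z
  have hD : HasFDerivAt (driftL n τ) (driftL n τ : _ →L[ℝ] _) w1 := (driftL n τ).hasFDerivAt
  have hK2 : HasFDerivAt (kick U c) (kickDeriv U c w2.1) w2 := kick_hasFDerivAt hU c w2
  have hcomp : HasFDerivAt (leapfrog U τ)
      ((kickDeriv U c w2.1).comp ((driftL n τ).comp (kickDeriv U c z.1))) z := by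
    rw [leapfrog_eq]
    exact HasFDerivAt.comp z hK2 (HasFDerivAt.comp z hD hK1)
  rw [hcomp.fderiv]
  simp only [ContinuousLinearMap.coe_comp', Function.comp_apply]
  rw [omega_kickDeriv hU, omega_driftL, omega_kickDeriv hU]
end

section
/- Let U : ℝⁿ → ℝ be twice continuously differentiable and τ ∈ ℝ. At every point (q,p), the Jacobian matrix S of the leapfrog (Verlet) map Φ^U_τ satisfies det S = 1; consequently Φ^U_τ preserves the 2n-dimensional phase-space volume (Lebesgue measure). -/
open scoped BigOperators

open MeasureTheory

-- auxiliary
noncomputable def shearP {n : ℕ} (A : (Fin n → ℝ) →L[ℝ] (Fin n → ℝ)) :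
    ((Fin n → ℝ) × (Fin n → ℝ)) →L[ℝ] ((Fin n → ℝ) × (Fin n → ℝ)) :=
  (ContinuousLinearMap.fst ℝ _ _).prod
    (ContinuousLinearMap.snd ℝ _ _ + A.comp (ContinuousLinearMap.fst ℝ _ _))

noncomputable def shearQ (n : ℕ) (τ : ℝ) :
    ((Fin n → ℝ) × (Fin n → ℝ)) →L[ℝ] ((Fin n → ℝ) × (Fin n → ℝ)) :=
  (ContinuousLinearMap.fst ℝ (Fin n → ℝ) (Fin n → ℝ)
      + τ • ContinuousLinearMap.snd ℝ (Fin n → ℝ) (Fin n → ℝ)).prod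
    (ContinuousLinearMap.snd ℝ (Fin n → ℝ) (Fin n → ℝ))

lemma det_shearP {n : ℕ} (A : (Fin n → ℝ) →L[ℝ] (Fin n → ℝ)) :
    LinearMap.det (shearP A).toLinearMap = 1 := by
  classical
  set bE := Pi.basisFun ℝ (Fin n)
  set b := bE.prod bE
  rw [← LinearMap.det_toMatrix b]
  have hM : LinearMap.toMatrix b b (shearP A).toLinearMap =
      Matrix.fromBlocks 1 0 (LinearMap.toMatrix bE bE A.toLinearMap) 1 := by
    ext i j
    rcases i with i | i <;> rcases j with j | j <;>
      simp [LinearMap.toMatrix_apply, b, shearP, Module.Basis.prod_apply, Matrix.one_apply,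
        Finsupp.single_apply, eq_comm]
  rw [hM, Matrix.det_fromBlocks_zero₁₂]
  simp

lemma det_shearQ {n : ℕ} (τ : ℝ) :
    LinearMap.det (shearQ n τ).toLinearMap = 1 := by
  classical
  set bE := Pi.basisFun ℝ (Fin n)
  set b := bE.prod bE
  rw [← LinearMap.det_toMatrix b]
  have hM : LinearMap.toMatrix b b (shearQ n τ).toLinearMap =
      Matrix.fromBlocks 1 (τ • (1 : Matrix (Fin n) (Fin n) ℝ)) 0 1 := by
    ext i j
    rcases i with i | i <;> rcases j with j | j <;>
      simp [LinearMap.toMatrix_apply, b, shearQ, Module.Basis.prod_apply, Matrix.one_apply,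
        Matrix.smul_apply, Pi.basisFun_apply, mul_comm, Finsupp.single_apply, eq_comm]
  rw [hM, Matrix.det_fromBlocks_zero₂₁]
  simp


open MeasureTheory in
/-- At every point, the Jacobian of the leapfrog (Verlet) map has determinant 1;
consequently the map preserves the phase-space volume (Lebesgue measure). -/
theorem leapfrog_det_one_volume_preserving {n : ℕ} (U : (Fin n → ℝ) → ℝ)
    (hU : ContDiff ℝ 2 U) (τ : ℝ) :
    (∀ z : (Fin n → ℝ) × (Fin n → ℝ),
      LinearMap.det ((fderiv ℝ (leapfrog U τ) z).toLinearMap) = 1) ∧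
    MeasurePreserving (leapfrog U τ) volume volume := by
  classical
  set G : (Fin n → ℝ) → (Fin n → ℝ) := grad U with hGdef
  -- G is C¹
  have hG : ContDiff ℝ 1 G := by
    have h1 : ContDiff ℝ 1 (fderiv ℝ U) := hU.fderiv_right (by norm_num)
    have : G = (fun L : (Fin n → ℝ) →L[ℝ] ℝ => (fun i => L (Pi.single i 1))) ∘ fderiv ℝ U := rfl
    rw [this]
    exact (contDiff_pi.2 fun i =>
      (ContinuousLinearMap.apply ℝ ℝ (Pi.single i 1 : Fin n → ℝ)).contDiff).comp h1
  set F : ((Fin n → ℝ) × (Fin n → ℝ)) → ((Fin n → ℝ) × (Fin n → ℝ)) :=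
    fun z => (z.1, z.2 - (τ / 2) • G z.1) with hFdef
  have hLF : leapfrog U τ = F ∘ (shearQ n τ) ∘ F := by
    funext z
    simp only [leapfrog, Function.comp, F, shearQ, ContinuousLinearMap.prod_apply,
      ContinuousLinearMap.add_apply, ContinuousLinearMap.coe_fst', ContinuousLinearMap.coe_snd',
      ContinuousLinearMap.smul_apply, hGdef]
  have hGdiff : Differentiable ℝ G := hG.differentiable one_ne_zero
  -- derivative of F
  have hDF : ∀ z : ((Fin n → ℝ) × (Fin n → ℝ)),
      HasFDerivAt F (shearP (-(τ / 2) • fderiv ℝ G z.1)) z := by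
    intro z
    have h1 : HasFDerivAt (fun w : ((Fin n → ℝ) × (Fin n → ℝ)) => w.2 - (τ / 2) • G w.1)
        (ContinuousLinearMap.snd ℝ _ _ +
          ((-(τ / 2) • fderiv ℝ G z.1).comp (ContinuousLinearMap.fst ℝ _ _))) z := by
      have hg : HasFDerivAt (fun w : ((Fin n → ℝ) × (Fin n → ℝ)) => G w.1)
          ((fderiv ℝ G z.1).comp (ContinuousLinearMap.fst ℝ _ _)) z :=
        ((hGdiff z.1).hasFDerivAt).comp z (hasFDerivAt_fst)
      have := (hasFDerivAt_snd (𝕜 := ℝ) (p := z)).sub (hg.const_smul (τ / 2))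
      refine this.congr_fderiv ?_
      ext w <;> simp [neg_smul]
    exact HasFDerivAt.prodMk hasFDerivAt_fst h1
  have hdet : ∀ z, LinearMap.det ((fderiv ℝ (leapfrog U τ) z).toLinearMap) = 1 := by
    intro z
    have h1 := hDF z
    have h2 : HasFDerivAt (shearQ n τ) (shearQ n τ) (F z) := (shearQ n τ).hasFDerivAt
    have h3 := hDF (shearQ n τ (F z))
    have hcomp : HasFDerivAt (F ∘ ⇑(shearQ n τ) ∘ F)
        ((shearP (-(τ / 2) • fderiv ℝ G (shearQ n τ (F z)).1)).comp
          ((shearQ n τ).comp (shearP (-(τ / 2) • fderiv ℝ G z.1)))) z :=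
      h3.comp z (h2.comp z h1)
    have hfd : fderiv ℝ (leapfrog U τ) z =
        (shearP (-(τ / 2) • fderiv ℝ G (shearQ n τ (F z)).1)).comp
          ((shearQ n τ).comp (shearP (-(τ / 2) • fderiv ℝ G z.1))) := by
      rw [hLF]; exact hcomp.fderiv
    rw [hfd]
    simp only [ContinuousLinearMap.toLinearMap_comp, LinearMap.det_comp, det_shearP, det_shearQ]
    ring
  refine ⟨hdet, ?_⟩
  -- measure preservation
  have hGm : Continuous G := hG.continuous
  have hvol : (volume : Measure ((Fin n → ℝ) × (Fin n → ℝ))) = volume.prod volume :=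
    Measure.volume_eq_prod _ _
  have hF : MeasurePreserving F volume volume := by
    rw [hvol]
    exact MeasurePreserving.skew_product (MeasurePreserving.id _)
      (f := id) (g := fun q p => p - (τ / 2) • G q)
      (by fun_prop)
      (ae_of_all _ fun q => by
        simpa [sub_eq_add_neg] using
          (measurePreserving_add_right (volume : Measure (Fin n → ℝ))
            (-((τ / 2) • G q))).map_eq)
  have hQ : MeasurePreserving (shearQ n τ) volume volume := by
    have hswap : MeasurePreserving (Prod.swap : ((Fin n → ℝ) × (Fin n → ℝ)) → _)
        volume volume := by
      rw [hvol]; exact Measure.measurePreserving_swap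
    have hskew : MeasurePreserving
        (fun w : ((Fin n → ℝ) × (Fin n → ℝ)) => (w.1, w.2 + τ • w.1)) volume volume := by
      rw [hvol]
      exact MeasurePreserving.skew_product (MeasurePreserving.id _)
        (f := id) (g := fun a b => b + τ • a)
        (by fun_prop)
        (ae_of_all _ fun a =>
          (measurePreserving_add_right (volume : Measure (Fin n → ℝ)) (τ • a)).map_eq)
    have : (shearQ n τ : ((Fin n → ℝ) × (Fin n → ℝ)) → _) =
        Prod.swap ∘ (fun w : ((Fin n → ℝ) × (Fin n → ℝ)) => (w.1, w.2 + τ • w.1)) ∘ Prod.swap := by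
      funext z
      simp [shearQ, Prod.swap]
    rw [this]
    exact (hswap.comp hskew).comp hswap
  rw [hLF]
  exact (hF.comp hQ).comp hF
end
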